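/- Let ρ1 ∈ (0,1) and ρ2 ∈ (0,1−ρ1). Then the matrix G² := (1/2)·(R₂₁·(R⁻¹)ᵀ·H¹·R⁻¹ + R₂₂·(R⁻¹)ᵀ·H²·R⁻¹) equals [[0, 0], [0, −√((ρ1+ρ2)(1−ρ1−ρ2))]]. -/
import Mathlib


open Matrix

/-- The normal-mode transformation matrix of the two-species TASEP. -/
noncomputable def matR (ρ1 ρ2 : ℝ) : Matrix (Fin 2) (Fin 2) ℝ :=
  !![1 / Real.sqrt (ρ1*(1 - ρ1)), 0;
     1 / Real.sqrt ((ρ1 + ρ2)*(1 - ρ1 - ρ2)), 1 / Real.sqrt ((ρ1 + ρ2)*(1 - ρ1 - ρ2))]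

/-- The Hessian of the current j₁(ρ) = ρ1(1−ρ1). -/
def matH1 : Matrix (Fin 2) (Fin 2) ℝ := !![-2, 0; 0, 0]

/-- The Hessian of the current j₂(ρ) = ρ2(1−ρ2) − 2ρ1ρ2. -/
def matH2 : Matrix (Fin 2) (Fin 2) ℝ := !![0, -2; -2, -2]

/-- The coupling matrix G² of the second normal mode. -/
theorem matG2_eq
    (ρ1 ρ2 : ℝ) (h1 : ρ1 ∈ Set.Ioo (0:ℝ) 1) (h2 : ρ2 ∈ Set.Ioo (0:ℝ) (1 - ρ1)) :
    (1/2 : ℝ) • (matR ρ1 ρ2 1 0 • ((matR ρ1 ρ2)⁻¹ᵀ * matH1 * (matR ρ1 ρ2)⁻¹)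
        + matR ρ1 ρ2 1 1 • ((matR ρ1 ρ2)⁻¹ᵀ * matH2 * (matR ρ1 ρ2)⁻¹))
      = !![0, 0; 0, -Real.sqrt ((ρ1 + ρ2)*(1 - ρ1 - ρ2))] := by
  obtain ⟨h1a, h1b⟩ := h1
  obtain ⟨h2a, h2b⟩ := h2
  have hx : (0:ℝ) < ρ1*(1 - ρ1) := by nlinarith
  have hy : (0:ℝ) < (ρ1 + ρ2)*(1 - ρ1 - ρ2) := by nlinarith
  set s := Real.sqrt (ρ1*(1 - ρ1)) with hs
  set t := Real.sqrt ((ρ1 + ρ2)*(1 - ρ1 - ρ2)) with ht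
  have hs0 : 0 < s := Real.sqrt_pos.mpr hx
  have ht0 : 0 < t := Real.sqrt_pos.mpr hy
  have hinv : (matR ρ1 ρ2)⁻¹ = !![s, 0; -s, t] := by
    apply Matrix.inv_eq_right_inv
    ext i j
    fin_cases i <;> fin_cases j <;>
      simp [matR, Matrix.mul_apply, Fin.sum_univ_two, ← hs, ← ht] <;>
      field_simp
  have htr : (!![s, 0; -s, t] : Matrix (Fin 2) (Fin 2) ℝ)ᵀ = !![s, -s; 0, t] := by
    ext i j
    fin_cases i <;> fin_cases j <;> rfl
  have ht2 : t * t = (ρ1 + ρ2) * (1 - ρ1 - ρ2) := Real.mul_self_sqrt hy.le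
  rw [hinv, htr]
  ext i j
  fin_cases i <;> fin_cases j <;>
    simp [matR, matH1, matH2, Matrix.mul_apply, Fin.sum_univ_two, ← ht] <;>
    field_simp <;> nlinarith [ht2, ht0, hs0]
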